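/- arXiv:1512.01009 — 6 statements merged into one kernel-verified Lean document; each statement's English description precedes it below -/
import Mathlib

section
/- Let q ≠ 2 be a prime power and n ≥ 1. Let A_1,...,A_m and B_1,...,B_m be affine subspaces of the n-dimensional affine space over F_q such that A_i ∩ B_i = ∅ for all i, and A_i ∩ B_j ≠ ∅ whenever i < j. Then m ≤ q^n + 1. -/
def IsAffineSubspace {F : Type*} [Field F] {n : ℕ} (S : Set (Fin n → F)) : Prop :=
  ∃ (a : Fin n → F) (U : Submodule F (Fin n → F)), S = (fun u => a + u) '' (U : Set (Fin n → F))

private lemma mem_shift {F : Type} [Field F] {n : ℕ} (a y : Fin n → F)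
    (U : Submodule F (Fin n → F)) :
    y ∈ (fun u => a + u) '' (U : Set (Fin n → F)) ↔ y - a ∈ U := by
  constructor
  · rintro ⟨u, hu, rfl⟩; simpa using hu
  · intro h; exact ⟨y - a, h, by show a + (y - a) = y; rw [add_sub_cancel]⟩

private lemma sum_indicator_card (p : ℕ) {X : Type} [Fintype X] (s : Set X)
    [DecidablePred (· ∈ s)] :
    ∑ x : X, s.indicator (1 : X → ZMod p) x = (Nat.card s : ZMod p) := by
  simp [Set.indicator_apply, Finset.sum_boole, Nat.card_eq_fintype_card,
    ← Set.toFinset_card, Set.toFinset]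

private lemma aux_card_inter {F : Type} [Field F] [Fintype F] {n : ℕ}
    {A B : Set (Fin n → F)} (hA : IsAffineSubspace A) (hB : IsAffineSubspace B)
    (hne : (A ∩ B).Nonempty) :
    ∃ d : ℕ, Nat.card ↥(A ∩ B) = Fintype.card F ^ d := by
  obtain ⟨a, U, rfl⟩ := hA
  obtain ⟨b, V, rfl⟩ := hB
  obtain ⟨x, hxA, hxB⟩ := hne
  rw [mem_shift] at hxA hxB
  have key : ((fun u => a + u) '' (U : Set (Fin n → F)))
        ∩ ((fun u => b + u) '' (V : Set (Fin n → F)))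
      = (fun u => x + u) '' ((U ⊓ V : Submodule F (Fin n → F)) : Set (Fin n → F)) := by
    ext y
    simp only [Set.mem_inter_iff, mem_shift, Submodule.mem_inf]
    constructor
    · rintro ⟨h1, h2⟩
      exact ⟨by simpa [sub_sub_sub_cancel_right] using U.sub_mem h1 hxA,
             by simpa [sub_sub_sub_cancel_right] using V.sub_mem h2 hxB⟩
    · rintro ⟨h1, h2⟩
      exact ⟨by simpa [sub_add_sub_cancel] using U.add_mem h1 hxA,
             by simpa [sub_add_sub_cancel] using V.add_mem h2 hxB⟩
  rw [key]
  refine ⟨Module.finrank F ↥(U ⊓ V), ?_⟩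
  rw [Nat.card_image_of_injective (add_right_injective x)]
  haveI : Fintype ↥(U ⊓ V : Submodule F (Fin n → F)) := Fintype.ofFinite _
  rw [Nat.card_coe_set_eq, Set.ncard_eq_toFinset_card']
  rw [show ((U ⊓ V : Submodule F (Fin n → F)) : Set (Fin n → F)).toFinset.card
      = Fintype.card ↥(U ⊓ V : Submodule F (Fin n → F)) by
    rw [Set.toFinset_card]; congr 1]
  exact Module.card_eq_pow_finrank

theorem stmt0 (q n : ℕ) (hq : IsPrimePow q) (hq2 : q ≠ 2) (hn : 1 ≤ n)
    (F : Type) [Field F] [Fintype F] (hF : Fintype.card F = q)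
    (m : ℕ) (A B : Fin m → Set (Fin n → F))
    (hA : ∀ i, IsAffineSubspace (A i)) (hB : ∀ i, IsAffineSubspace (B i))
    (hdisj : ∀ i, A i ∩ B i = ∅)
    (hcross : ∀ i j, i < j → (A i ∩ B j).Nonempty) :
    m ≤ q ^ n + 1 := by
  classical
  rcases le_or_gt m 1 with hm | hm
  · exact hm.trans (Nat.le_add_left 1 _)
  have hq3 : 3 ≤ q := by
    have := hq.two_le; omega
  set p := (q - 1).minFac with hp_def
  have hp : p.Prime := Nat.minFac_prime (by omega)
  haveI : Fact p.Prime := ⟨hp⟩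
  have hpd : p ∣ q - 1 := Nat.minFac_dvd _
  have hq_one : ((q : ℕ) : ZMod p) = 1 := by
    have h0 : ((q - 1 : ℕ) : ZMod p) = 0 := (ZMod.natCast_eq_zero_iff _ _).mpr hpd
    have h1 : q - 1 + 1 = q := by omega
    calc ((q : ℕ) : ZMod p) = ((q - 1 + 1 : ℕ) : ZMod p) := by rw [h1]
      _ = 1 := by push_cast [h0]; ring
  have hcard1 : ∀ i j : Fin m, i < j → ((Nat.card ↥(A i ∩ B j) : ℕ) : ZMod p) = 1 := by
    intro i j hij
    obtain ⟨d, hd⟩ := aux_card_inter (hA i) (hB j) (hcross i j hij)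
    rw [hd, hF]
    push_cast [hq_one]
    ring
  have hm1 : m - 1 ≤ m := Nat.sub_le m 1
  set ι : Fin (m - 1) → Fin m := Fin.castLE hm1 with hι
  set v : Fin (m - 1) → ((Fin n → F) → ZMod p) :=
    fun i => (A (ι i)).indicator 1 with hv_def
  have hsum : ∀ (i : Fin (m - 1)) (j : Fin m),
      ∑ x : Fin n → F, v i x * (B j).indicator (1 : (Fin n → F) → ZMod p) x
        = ((Nat.card ↥(A (ι i) ∩ B j) : ℕ) : ZMod p) := by
    intro i j
    have e : ∀ x, v i x * (B j).indicator (1 : (Fin n → F) → ZMod p) x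
        = (A (ι i) ∩ B j).indicator (1 : (Fin n → F) → ZMod p) x := by
      intro x
      simp only [hv_def, Set.indicator_apply, Pi.one_apply, Set.mem_inter_iff]
      by_cases h1 : x ∈ A (ι i) <;> by_cases h2 : x ∈ B j <;> simp [h1, h2]
    rw [Finset.sum_congr rfl fun x _ => e x]
    exact sum_indicator_card p _
  have hv : LinearIndependent (ZMod p) v := by
    rw [Fintype.linearIndependent_iff]
    intro c hc
    by_contra hnz
    push_neg at hnz
    obtain ⟨i0, hi0⟩ := hnz
    set S : Finset (Fin (m - 1)) := Finset.univ.filter (fun i => c i ≠ 0) with hS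
    have hSne : S.Nonempty := ⟨i0, by simp [hS, hi0]⟩
    set k := S.max' hSne with hk
    have hck : c k ≠ 0 := by
      have := S.max'_mem hSne
      simp only [hS, Finset.mem_filter] at this
      exact this.2
    have hle : ∀ i ∈ S, i ≤ k := fun i hi => S.le_max' i hi
    have hkm : (k : ℕ) < m - 1 := k.isLt
    have pair : ∀ j : Fin m,
        ∑ i ∈ S, c i * ((Nat.card ↥(A (ι i) ∩ B j) : ℕ) : ZMod p) = 0 := by
      intro j
      have huniv : ∑ i : Fin (m - 1),
          c i * ((Nat.card ↥(A (ι i) ∩ B j) : ℕ) : ZMod p) = 0 := by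
        have swap : ∑ i : Fin (m - 1), c i * ((Nat.card ↥(A (ι i) ∩ B j) : ℕ) : ZMod p)
            = ∑ x : Fin n → F, (∑ i : Fin (m - 1), c i • v i) x
                * (B j).indicator (1 : (Fin n → F) → ZMod p) x := by
          simp only [← hsum, Finset.mul_sum]
          rw [Finset.sum_comm]
          refine Finset.sum_congr rfl fun x _ => ?_
          simp [Finset.sum_apply, Finset.sum_mul, smul_eq_mul, Pi.smul_apply, mul_assoc]
        rw [swap, hc]
        simp
      refine (Finset.sum_filter_of_ne ?_).trans huniv
      intro i _ hf
      intro hc0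
      exact hf (by rw [hc0, zero_mul])
    have hkm' : (k : ℕ) + 1 < m := by omega
    have e1 : ∑ i ∈ S, c i = 0 := by
      have hpair := pair ⟨(k : ℕ) + 1, hkm'⟩
      rw [← hpair]
      refine Finset.sum_congr rfl fun i hi => ?_
      have hik := Fin.le_def.mp (hle i hi)
      have hlt : ι i < (⟨(k : ℕ) + 1, hkm'⟩ : Fin m) := by
        rw [Fin.lt_def]
        simp only [hι, Fin.coe_castLE]
        omega
      rw [hcard1 _ _ hlt, mul_one]
    have hkm2 : (k : ℕ) < m := by omega
    have hkS : k ∈ S := S.max'_mem hSne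
    have hdiag : ((Nat.card ↥(A (ι k) ∩ B ⟨(k : ℕ), hkm2⟩) : ℕ) : ZMod p) = 0 := by
      have hιk : ι k = (⟨(k : ℕ), hkm2⟩ : Fin m) := rfl
      rw [hιk, hdisj]
      simp
    have e2 : ∑ i ∈ S.erase k, c i = 0 := by
      have hpair := pair ⟨(k : ℕ), hkm2⟩
      rw [← Finset.add_sum_erase S _ hkS, hdiag, mul_zero, zero_add] at hpair
      rw [← hpair]
      refine Finset.sum_congr rfl fun i hi => ?_
      have hik := Fin.le_def.mp (hle i (Finset.mem_of_mem_erase hi))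
      have hine : (i : ℕ) ≠ (k : ℕ) := fun h => Finset.ne_of_mem_erase hi (Fin.ext h)
      have hlt : ι i < (⟨(k : ℕ), hkm2⟩ : Fin m) := by
        rw [Fin.lt_def]
        simp only [hι, Fin.coe_castLE]
        omega
      rw [hcard1 _ _ hlt, mul_one]
    have hck0 : c k = 0 := by
      have h3 := Finset.add_sum_erase S c hkS
      rw [e2, e1] at h3
      simpa using h3
    exact hck hck0
  have hfr := hv.fintype_card_le_finrank
  rw [Fintype.card_fin] at hfr
  have hrk : Module.finrank (ZMod p) ((Fin n → F) → ZMod p) = q ^ n := by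
    rw [Module.finrank_pi]
    simp [Fintype.card_fun, hF]
  rw [hrk] at hfr
  omega
end

section
/- For every prime power q and every n ≥ 1, there exists a cross-intersecting pair of families of affine subspaces (A_i, B_i)_{1≤i≤m} of F_q^n with m = (q^n - 1)/(q - 1). Hence m(n,q) ≥ (q^n - 1)/(q - 1). -/
open Projectivization
open scoped LinearAlgebra.Projectivization

namespace CrossIntAux

variable {F : Type} [Field F] {n : ℕ}

/-- The linear functional `x ↦ ∑ k, v k * x k`. -/
noncomputable def L (v : Fin n → F) : (Fin n → F) →ₗ[F] F :=
  ∑ k, v k • LinearMap.proj k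

lemma L_apply (v x : Fin n → F) : L v x = ∑ k, v k * x k := by
  simp [L]

lemma L_single (v : Fin n → F) (k : Fin n) (c : F) :
    L v (Pi.single k c) = v k * c := by
  classical
  rw [L_apply]
  rw [Finset.sum_eq_single k]
  · simp
  · intro j _ hj; simp [Pi.single_apply, hj]
  · simp

lemma exists_L_eq_one {v : Fin n → F} (hv : v ≠ 0) : ∃ β, L v β = 1 := by
  obtain ⟨k, hk⟩ := Function.ne_iff.1 hv
  refine ⟨Pi.single k (v k)⁻¹, ?_⟩
  rw [L_single, mul_inv_cancel₀]
  simpa using hk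

lemma key {u w : Fin n → F} (hu : u ≠ 0) (h : ¬ ∃ a : F, a • u = w) :
    ∃ x, L u x = 0 ∧ L w x = 1 := by
  have h0 : ∃ x, L u x = 0 ∧ L w x ≠ 0 := by
    by_contra hc
    push_neg at hc
    obtain ⟨k, hk⟩ := Function.ne_iff.1 hu
    have hk' : u k ≠ 0 := by simpa using hk
    set y : Fin n → F := Pi.single k 1 with hy
    have hLy : L u y = u k := by rw [hy, L_single, mul_one]
    have hLy0 : L u y ≠ 0 := hLy ▸ hk'
    set c : F := L w y / L u y with hc'
    apply h
    refine ⟨c, ?_⟩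
    have hx : ∀ x, L w x = c * L u x := by
      intro x
      have hz : L u (x - (L u x / L u y) • y) = 0 := by
        rw [map_sub, map_smul, smul_eq_mul, div_mul_cancel₀ _ hLy0, sub_self]
      have hz' := hc _ hz
      rw [map_sub, map_smul, smul_eq_mul, sub_eq_zero] at hz'
      rw [hz', hc']
      field_simp
    funext k'
    have := hx (Pi.single k' 1)
    rw [L_single, L_single, mul_one, mul_one] at this
    simpa [Pi.smul_apply, smul_eq_mul] using this.symm
  obtain ⟨x, hx0, hxw⟩ := h0
  refine ⟨(L w x)⁻¹ • x, ?_, ?_⟩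
  · rw [map_smul, hx0, smul_zero]
  · rw [map_smul, smul_eq_mul, inv_mul_cancel₀ hxw]

end CrossIntAux

open CrossIntAux in
theorem stmt4 (q n : ℕ) (hq : IsPrimePow q) (hn : 1 ≤ n)
    (F : Type) [Field F] [Fintype F] (hF : Fintype.card F = q) :
    ∃ (A B : Fin ((q ^ n - 1) / (q - 1)) → Set (Fin n → F)),
      (∀ i, IsAffineSubspace (A i)) ∧ (∀ i, IsAffineSubspace (B i)) ∧
      (∀ i, A i ∩ B i = ∅) ∧
      (∀ i j, i < j → (A i ∩ B j).Nonempty) := by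
  classical
  have hq2 : 2 ≤ q := hq.two_le
  haveI : Finite (ℙ F (Fin n → F)) := Quotient.finite _
  haveI : Fintype (ℙ F (Fin n → F)) := Fintype.ofFinite _
  -- cardinality of the projectivization
  have hfib : ∀ p : ℙ F (Fin n → F),
      Fintype.card {v : {v : (Fin n → F) // v ≠ 0} // Projectivization.mk' F v = p} = q - 1 := by
    intro p
    have e : Fˣ ≃ {v : {v : (Fin n → F) // v ≠ 0} // Projectivization.mk' F v = p} := by
      refine Equiv.ofBijective (fun c =>
        ⟨⟨(c : F) • p.rep, smul_ne_zero c.ne_zero p.rep_nonzero⟩, ?_⟩) ⟨?_, ?_⟩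
      · rw [Projectivization.mk'_eq_mk]
        conv_rhs => rw [← p.mk_rep]
        exact (Projectivization.mk_eq_mk_iff F _ _ _ p.rep_nonzero).2
          ⟨c, by rw [Units.smul_def]⟩
      · intro c c' hcc
        have h2 : (c : F) • p.rep = (c' : F) • p.rep :=
          congrArg (fun z : {v : {v : (Fin n → F) // v ≠ 0} // Projectivization.mk' F v = p}
            => z.1.1) hcc
        exact Units.ext (smul_left_injective F p.rep_nonzero h2)
      · rintro ⟨⟨v, hv⟩, hp⟩
        rw [Projectivization.mk'_eq_mk] at hp
        rw [← p.mk_rep] at hp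
        obtain ⟨a, ha⟩ := (Projectivization.mk_eq_mk_iff F _ _ hv p.rep_nonzero).1 hp
        refine ⟨a, ?_⟩
        apply Subtype.ext
        apply Subtype.ext
        show (a : F) • p.rep = v
        rw [← ha, Units.smul_def]
    rw [← Fintype.card_congr e, Fintype.card_units, hF]
  have hsum : Fintype.card {v : (Fin n → F) // v ≠ 0} = Fintype.card (ℙ F (Fin n → F)) * (q - 1) := by
    have hs : ∑ p : ℙ F (Fin n → F), Fintype.card
        {v : {v : (Fin n → F) // v ≠ 0} // Projectivization.mk' F v = p}
        = Fintype.card (ℙ F (Fin n → F)) * (q - 1) := by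
      rw [Finset.sum_congr rfl fun p _ => hfib p, Finset.sum_const, smul_eq_mul,
        Finset.card_univ]
    rw [Fintype.card_congr (Equiv.sigmaFiberEquiv (Projectivization.mk' F)).symm,
      Fintype.card_sigma, hs]
  have hVcard : Fintype.card (Fin n → F) = q ^ n := by
    rw [Fintype.card_fun, hF, Fintype.card_fin]
  have hne : Fintype.card {v : (Fin n → F) // v ≠ 0} = q ^ n - 1 := by
    have h1 : Fintype.card {v : (Fin n → F) // v = 0} = 1 := Fintype.card_subtype_eq 0
    have := Fintype.card_subtype_compl (fun v : (Fin n → F) => v = 0)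
    rw [h1, hVcard] at this
    simpa using this
  have hcard : Fintype.card (ℙ F (Fin n → F)) = (q ^ n - 1) / (q - 1) := by
    have hmul : q ^ n - 1 = Fintype.card (ℙ F (Fin n → F)) * (q - 1) := by rw [← hne, hsum]
    exact (Nat.div_eq_of_eq_mul_left (by omega) hmul).symm
  obtain e := Fintype.equivFinOfCardEq hcard
  set v : Fin ((q ^ n - 1) / (q - 1)) → (Fin n → F) := fun i => (e.symm i).rep with hv'
  have hv : ∀ i, v i ≠ 0 := fun i => (e.symm i).rep_nonzero
  choose β hβ using fun i => exists_L_eq_one (hv i)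
  refine ⟨fun i => (LinearMap.ker (L (v i)) : Set (Fin n → F)),
    fun i => (fun u => β i + u) '' (LinearMap.ker (L (v i)) : Set (Fin n → F)), ?_, ?_, ?_, ?_⟩
  · intro i
    refine ⟨0, LinearMap.ker (L (v i)), ?_⟩
    ext x; simp
  · intro i
    exact ⟨β i, LinearMap.ker (L (v i)), rfl⟩
  · intro i
    rw [Set.eq_empty_iff_forall_notMem]
    rintro x ⟨hx1, u, hu, hux⟩
    have hxm : L (v i) x = 0 := hx1
    have hum : L (v i) u = 0 := hu
    have : L (v i) x = 1 := by rw [← hux, map_add, hβ, hum, add_zero]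
    rw [hxm] at this
    exact zero_ne_one this
  · intro i j hij
    have hne' : e.symm i ≠ e.symm j := fun hh => (Nat.ne_of_lt hij)
      (congrArg Fin.val (e.symm.injective hh))
    have hnp : ¬ ∃ a : F, a • v i = v j := by
      rintro ⟨a, ha⟩
      apply hne'
      have : Projectivization.mk F (v j) (hv j) = Projectivization.mk F (v i) (hv i) :=
        (Projectivization.mk_eq_mk_iff' F _ _ (hv j) (hv i)).2 ⟨a, ha⟩
      have h3 : e.symm j = e.symm i := by
        conv_lhs => rw [← (e.symm j).mk_rep]
        conv_rhs => rw [← (e.symm i).mk_rep]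
        exact this
      exact h3.symm
    obtain ⟨x, hx0, hx1⟩ := key (hv i) hnp
    refine ⟨x, hx0, x - β j, ?_, by funext k; simp⟩
    show L (v j) (x - β j) = 0
    rw [map_sub, hx1, hβ, sub_self]
end

section
/- Let q ≠ 2 be a prime power and n ≥ 1. If A_1,...,A_m and B_1,...,B_m are affine hyperplanes of F_q^n (affine subspaces of dimension n-1) with A_i ∩ B_i = ∅ for all i and A_i ∩ B_j ≠ ∅ for i < j, then m ≤ q^n + 1. -/
open Module

def IsAffineHyperplane {F : Type*} [Field F] {n : ℕ} (S : Set (Fin n → F)) : Prop :=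
  ∃ (a : Fin n → F) (U : Submodule F (Fin n → F)),
    Module.finrank F U = n - 1 ∧ S = (fun u => a + u) '' (U : Set (Fin n → F))

section Aux

variable {F : Type} [Field F] {n : ℕ}

private lemma coset_subset {U : Submodule F (Fin n → F)} {a b : Fin n → F} (h : a - b ∈ U) :
    (fun u => a + u) '' (U : Set (Fin n → F)) ⊆ (fun u => b + u) '' (U : Set (Fin n → F)) := by
  rintro y ⟨v, hv, rfl⟩
  exact ⟨(a - b) + v, U.add_mem h hv, by dsimp only; abel⟩

private lemma coset_eq_of_mem {U : Submodule F (Fin n → F)} {a b x : Fin n → F}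
    (ha : x ∈ (fun u => a + u) '' (U : Set (Fin n → F)))
    (hb : x ∈ (fun u => b + u) '' (U : Set (Fin n → F))) :
    (fun u => a + u) '' (U : Set (Fin n → F)) = (fun u => b + u) '' (U : Set (Fin n → F)) := by
  obtain ⟨u, hu, hua⟩ := ha
  obtain ⟨w, hw, hwb⟩ := hb
  have hab : a - b ∈ U := by
    have hx : a + u = b + w := hua.trans hwb.symm
    have : a - b = w - u := by
      have : b = a + u - w := by rw [hx]; abel
      rw [this]; abel
    rw [this]; exact U.sub_mem hw hu
  have hba : b - a ∈ U := by simpa using U.neg_mem hab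
  exact le_antisymm (coset_subset hab) (coset_subset hba)

private lemma dir_eq (hn : 1 ≤ n) {U W : Submodule F (Fin n → F)}
    (hU : finrank F U = n - 1) (hW : finrank F W = n - 1) {a b : Fin n → F}
    (h : ((fun u => a + u) '' (U : Set (Fin n → F))) ∩
      ((fun u => b + u) '' (W : Set (Fin n → F))) = ∅) : U = W := by
  by_contra hne
  have hV : finrank F (Fin n → F) = n := Module.finrank_fin_fun F
  have hlt : U < U ⊔ W := by
    refine lt_of_le_of_ne le_sup_left fun he => hne ?_
    have hWU : W ≤ U := he ▸ le_sup_right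
    exact (Submodule.eq_of_le_of_finrank_le hWU (by rw [hU, hW])).symm
  have h2 : n ≤ finrank F ↥(U ⊔ W) := by
    have := Submodule.finrank_lt_finrank_of_lt hlt
    omega
  have h3 : U ⊔ W = ⊤ := by
    apply Submodule.eq_top_of_finrank_eq
    rw [hV]
    exact le_antisymm ((Submodule.finrank_le _).trans (le_of_eq hV)) h2
  have hmem : b - a ∈ U ⊔ W := h3 ▸ Submodule.mem_top
  obtain ⟨u, hu, w, hw, huw⟩ := Submodule.mem_sup.mp hmem
  have hx : (a + u) ∈ ((fun u => a + u) '' (U : Set (Fin n → F))) ∩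
      ((fun u => b + u) '' (W : Set (Fin n → F))) := by
    refine ⟨⟨u, hu, rfl⟩, ⟨-w, W.neg_mem hw, ?_⟩⟩
    dsimp only
    have hb : b = u + w + a := by rw [huw]; abel
    rw [hb]; abel
  rw [h] at hx
  exact hx

private lemma exists_functional (hn : 1 ≤ n) {U : Submodule F (Fin n → F)}
    (hU : finrank F U = n - 1) :
    ∃ f : Module.Dual F (Fin n → F), f ≠ 0 ∧ LinearMap.ker f = U := by
  have hV : finrank F (Fin n → F) = n := Module.finrank_fin_fun F
  have hlt : U < ⊤ := lt_top_iff_ne_top.mpr (fun h => by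
    rw [h, finrank_top, hV] at hU; omega)
  obtain ⟨f, hf0, hker⟩ := U.exists_dual_map_eq_bot_of_lt_top hlt inferInstance
  have hle : U ≤ LinearMap.ker f := by
    intro x hx
    have hmem : f x ∈ U.map f := ⟨x, hx, rfl⟩
    rw [hker] at hmem
    simpa using hmem
  refine ⟨f, hf0, ?_⟩
  have hr : LinearMap.range f = ⊤ := by
    obtain ⟨x, hx⟩ : ∃ x, f x ≠ 0 := by
      by_contra hc
      push_neg at hc
      exact hf0 (LinearMap.ext fun y => by simp [hc y])
    rw [Submodule.eq_top_iff']
    intro y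
    exact ⟨(y / f x) • x, by rw [map_smul, smul_eq_mul, div_mul_cancel₀ y hx]⟩
  have hrank : finrank F (LinearMap.ker f) = n - 1 := by
    have := LinearMap.finrank_range_add_finrank_ker f
    rw [hr, finrank_top, finrank_self, hV] at this
    omega
  exact (Submodule.eq_of_le_of_finrank_le hle (by rw [hU, hrank])).symm

end Aux

theorem stmt11 (q n : ℕ) (hq : IsPrimePow q) (hq2 : q ≠ 2) (hn : 1 ≤ n)
    (F : Type) [Field F] [Fintype F] (hF : Fintype.card F = q)
    (m : ℕ) (A B : Fin m → Set (Fin n → F))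
    (hA : ∀ i, IsAffineHyperplane (A i)) (hB : ∀ i, IsAffineHyperplane (B i))
    (hdisj : ∀ i, A i ∩ B i = ∅)
    (hcross : ∀ i j, i < j → (A i ∩ B j).Nonempty) :
    m ≤ q ^ n + 1 := by
  classical
  choose a U hU hAeq using hA
  choose b W hW hBeq using hB
  have hUW : ∀ i, U i = W i := fun i =>
    dir_eq hn (hU i) (hW i) (by rw [← hAeq i, ← hBeq i]; exact hdisj i)
  -- if i < j have the same direction, then A i = B j
  have key : ∀ i j, i < j → U i = U j → A i = B j := by
    intro i j hij he
    obtain ⟨x, hx⟩ := hcross i j hij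
    have hWU : W j = U i := ((hUW j).symm.trans he.symm)
    rw [hAeq i, hBeq j] at hx ⊢
    rw [hWU] at hx ⊢
    exact coset_eq_of_mem hx.1 hx.2
  have hAne : ∀ i, (A i).Nonempty := by
    intro i
    rw [hAeq i]
    exact ⟨a i, 0, Submodule.zero_mem _, by simp⟩
  let ε : Fin m → Bool := fun i => decide (∃ j, j < i ∧ U j = U i)
  -- injectivity of i ↦ (U i, ε i)
  have noconf : ∀ i j, i < j → U i = U j → ε i = ε j → False := by
    intro i j hij he hee
    have hej : ε j = true := by simp only [ε, decide_eq_true_eq]; exact ⟨i, hij, he⟩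
    have hei : ε i = true := hee.trans hej
    simp only [ε, decide_eq_true_eq] at hei
    obtain ⟨k, hki, hke⟩ := hei
    have h1 : A k = B i := key k i hki hke
    have h2 : A k = B j := key k j (hki.trans hij) (hke.trans he)
    have h3 : A i = B j := key i j hij he
    have : A i = B i := by rw [h3, ← h2, h1]
    obtain ⟨x, hx⟩ := hAne i
    have : x ∈ A i ∩ B i := ⟨hx, this ▸ hx⟩
    rw [hdisj i] at this
    exact this
  have inj : Function.Injective (fun i => (U i, ε i)) := by
    intro i j hij
    simp only [Prod.mk.injEq] at hij
    by_contra hne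
    rcases lt_or_gt_of_ne hne with h | h
    · exact noconf i j h hij.1 hij.2
    · exact noconf j i h hij.1.symm hij.2.symm
  -- choose functionals depending only on the subspace
  have hex : ∀ S : Submodule F (Fin n → F), ∃ f : Module.Dual F (Fin n → F),
      finrank F S = n - 1 → (f ≠ 0 ∧ LinearMap.ker f = S) := by
    intro S
    by_cases hS : finrank F S = n - 1
    · obtain ⟨f, h1, h2⟩ := exists_functional hn hS
      exact ⟨f, fun _ => ⟨h1, h2⟩⟩
    · exact ⟨0, fun h => absurd h hS⟩
  choose g hg using hex
  haveI : Finite (Module.Dual F (Fin n → F)) :=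
    Finite.of_injective (fun f => (f : (Fin n → F) → F)) DFunLike.coe_injective
  haveI : Fintype (Module.Dual F (Fin n → F)) := Fintype.ofFinite _
  -- the big injection
  let Φ : Fin m × {c : F // c ≠ 0} → {f : Module.Dual F (Fin n → F) // f ≠ 0} × Bool :=
    fun p => (⟨p.2.1 • g (U p.1), smul_ne_zero p.2.2 (hg _ (hU p.1)).1⟩, ε p.1)
  have hΦ : Function.Injective Φ := by
    rintro ⟨i, c, hc⟩ ⟨j, d, hd⟩ h
    simp only [Φ, Prod.mk.injEq, Subtype.mk.injEq] at h
    obtain ⟨h1, h2⟩ := h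
    have hUij : U i = U j := by
      have e1 : LinearMap.ker (c • g (U i)) = U i := by
        rw [LinearMap.ker_smul _ _ hc, (hg _ (hU i)).2]
      have e2 : LinearMap.ker (d • g (U j)) = U j := by
        rw [LinearMap.ker_smul _ _ hd, (hg _ (hU j)).2]
      rw [← e1, ← e2, h1]
    have hij : i = j := inj (Prod.ext hUij h2)
    subst hij
    have hcd : c = d := smul_left_injective F (hg _ (hU i)).1 h1
    simp [hcd]
  have hcard := Fintype.card_le_of_injective Φ hΦ
  have hq3 : 3 ≤ q := by
    have : 1 < Fintype.card F := Fintype.one_lt_card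
    omega
  have cSub : Fintype.card {c : F // c ≠ 0} = q - 1 := by
    have h0 := Fintype.card_subtype_compl (fun c : F => c = 0)
    simpa [Fintype.card_subtype_eq, hF] using h0
  have cD : Fintype.card (Module.Dual F (Fin n → F)) = q ^ n := by
    rw [card_eq_pow_finrank (K := F), Subspace.dual_finrank_eq, Module.finrank_fin_fun, hF]
  have cDsub : Fintype.card {f : Module.Dual F (Fin n → F) // f ≠ 0} = q ^ n - 1 := by
    have h0 := Fintype.card_subtype_compl (fun f : Module.Dual F (Fin n → F) => f = 0)
    simpa [Fintype.card_subtype_eq, cD] using h0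
  rw [Fintype.card_prod, Fintype.card_prod, Fintype.card_fin, cSub, cDsub,
    Fintype.card_bool] at hcard
  -- hcard : m * (q - 1) ≤ (q ^ n - 1) * 2
  have h1 : 1 ≤ q ^ n := Nat.one_le_pow _ _ (by omega)
  have step : m * (q - 1) ≤ (q ^ n - 1) * (q - 1) :=
    hcard.trans (Nat.mul_le_mul_left _ (by omega))
  have hm : m ≤ q ^ n - 1 := Nat.le_of_mul_le_mul_right step (by omega)
  omega
end

section
/- Let A_1,...,A_m be r-element sets and B_1,...,B_m be s-element sets such that A_i ∩ B_i = ∅ for all i and A_i ∩ B_j ≠ ∅ whenever i < j. Then m ≤ C(r+s, r). -/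
open Finset Matrix

namespace Stmt14Aux

variable {r s : ℕ}

lemma append_update {β : Type*} [DecidableEq (Fin s)] (a : Fin r → β) (x : Fin s → β) (i : Fin s) (y : β) :
    Fin.append a (Function.update x i y) =
      Function.update (Fin.append a x) (Fin.natAdd r i) y := by
  funext p
  refine Fin.addCases (fun k => ?_) (fun k => ?_) p
  · rw [Fin.append_left, Function.update_of_ne, Fin.append_left]
    exact Fin.ne_of_val_ne (by simp; omega)
  · rcases eq_or_ne k i with rfl | h
    · rw [Fin.append_right, Function.update_self, Function.update_self]
    · rw [Function.update_of_ne (fun hc => h (by simpa using Fin.val_injective (by simpa using congrArg Fin.val hc))),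
        Fin.append_right, Fin.append_right, Function.update_of_ne h]

/-- The alternating map `x ↦ det (rows a followed by rows x)`. -/
def omegaMap (a : Fin r → (Fin (r + s) → ℝ)) :
    (Fin (r + s) → ℝ) [⋀^Fin s]→ₗ[ℝ] ℝ where
  toFun x := Matrix.det (Matrix.of (Fin.append a x))
  map_update_add' x i u v := by
    simp only [append_update]
    exact Matrix.det_updateRow_add (Matrix.of (Fin.append a x)) (Fin.natAdd r i) u v
  map_update_smul' x i c u := by
    simp only [append_update]
    exact Matrix.det_updateRow_smul (Matrix.of (Fin.append a x)) (Fin.natAdd r i) c u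
  map_eq_zero_of_eq' x i j h hij := by
    refine Matrix.det_zero_of_row_eq (M := Matrix.of (Fin.append a x))
      (i := Fin.natAdd r i) (j := Fin.natAdd r j) ?_ ?_
    · exact fun hc => hij (by simpa using Fin.val_injective (by simpa using congrArg Fin.val hc))
    · show Fin.append a x (Fin.natAdd r i) = Fin.append a x (Fin.natAdd r j)
      rw [Fin.append_right, Fin.append_right, h]

/-- Evaluation of an alternating map at a fixed tuple, as a linear map. -/
def evalAt {n k : ℕ} (x : Fin k → (Fin n → ℝ)) :
    ((Fin n → ℝ) [⋀^Fin k]→ₗ[ℝ] ℝ) →ₗ[ℝ] ℝ where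
  toFun ω := ω x
  map_add' _ _ := rfl
  map_smul' _ _ := rfl

/-- Triangular system of functionals gives linear independence. -/
lemma linearIndependent_of_triangular {W : Type*} [AddCommGroup W] [Module ℝ W]
    {m : ℕ} (v : Fin m → W) (φ : Fin m → (W →ₗ[ℝ] ℝ))
    (hd : ∀ i, φ i (v i) ≠ 0) (ho : ∀ i j, i < j → φ j (v i) = 0) :
    LinearIndependent ℝ v := by
  rw [Fintype.linearIndependent_iff]
  intro g hg
  by_contra hc
  push_neg at hc
  obtain ⟨i₀, hi₀⟩ := hc
  have hne : (Finset.univ.filter fun i => g i ≠ 0).Nonempty :=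
    ⟨i₀, by simp [hi₀]⟩
  set j := (Finset.univ.filter fun i => g i ≠ 0).max' hne with hj
  have hjmem : g j ≠ 0 := by
    have := (Finset.univ.filter fun i => g i ≠ 0).max'_mem hne
    simpa using this
  have h0 : (φ j) (∑ i, g i • v i) = 0 := by rw [hg]; simp
  rw [map_sum] at h0
  have hsum : ∑ i, (φ j) (g i • v i) = g j * (φ j) (v j) := by
    rw [Finset.sum_eq_single j]
    · simp
    · intro i _ hij
      rcases lt_or_gt_of_ne (fun hc => hij hc) with hlt | hgt
      · rw [LinearMap.map_smul, ho i j hlt, smul_zero]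
      · have : g i = 0 := by
          by_contra hgi
          have hmemf : i ∈ Finset.univ.filter (fun i => g i ≠ 0) :=
            Finset.mem_filter.mpr ⟨Finset.mem_univ i, hgi⟩
          have := Finset.le_max' _ i hmemf
          rw [← hj] at this
          exact absurd this (not_le.mpr hgt)
        rw [this, zero_smul, LinearMap.map_zero]
    · simp
  rw [hsum] at h0
  exact hd j (by rcases mul_eq_zero.mp h0 with h | h; exact absurd h hjmem; exact h)

/-- Coordinates of an alternating map on increasing basis tuples, as a linear map. -/
noncomputable def coords (n k : ℕ) :
    ((Fin n → ℝ) [⋀^Fin k]→ₗ[ℝ] ℝ) →ₗ[ℝ] ({S : Finset (Fin n) // S.card = k} → ℝ) where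
  toFun ω S := ω fun l => Pi.basisFun ℝ (Fin n) (S.1.orderEmbOfFin S.2 l)
  map_add' _ _ := rfl
  map_smul' _ _ := rfl

lemma coords_injective (n k : ℕ) : LinearMap.ker (coords n k) = ⊥ := by
  rw [LinearMap.ker_eq_bot']
  intro ω hω
  refine Module.Basis.ext_alternating (Pi.basisFun ℝ (Fin n)) fun v hv => ?_
  classical
  set S : Finset (Fin n) := Finset.univ.image v with hS
  have hScard : S.card = k := by
    rw [hS, Finset.card_image_of_injective _ hv, Finset.card_univ, Fintype.card_fin]
  -- equivs from `Fin k` to `S`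
  have hb1 : Function.Bijective (fun l : Fin k => (⟨v l, by simp [hS]⟩ : {x // x ∈ S})) := by
    rw [Fintype.bijective_iff_injective_and_card]
    constructor
    · intro a b hab
      exact hv (by simpa using hab)
    · simp [Fintype.card_coe, hScard]
  have hb2 : Function.Bijective (fun l : Fin k =>
      (⟨S.orderEmbOfFin hScard l, Finset.orderEmbOfFin_mem S hScard l⟩ : {x // x ∈ S})) := by
    rw [Fintype.bijective_iff_injective_and_card]
    constructor
    · intro a b hab
      exact (S.orderEmbOfFin hScard).injective (by simpa using hab)
    · simp [Fintype.card_coe, hScard]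
  set e1 := Equiv.ofBijective _ hb1
  set e2 := Equiv.ofBijective _ hb2
  set σ : Equiv.Perm (Fin k) := e1.trans e2.symm with hσ
  have hvs : ∀ l, v l = S.orderEmbOfFin hScard (σ l) := by
    intro l
    have h2 : e2 (σ l) = e1 l := by rw [hσ]; simp
    calc v l = ((e1 l : {x // x ∈ S}) : Fin n) := rfl
      _ = ((e2 (σ l) : {x // x ∈ S}) : Fin n) := by rw [h2]
      _ = S.orderEmbOfFin hScard (σ l) := rfl
  have : (fun l => Pi.basisFun ℝ (Fin n) (v l)) =
      (fun l => Pi.basisFun ℝ (Fin n) (S.orderEmbOfFin hScard l)) ∘ σ := by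
    funext l
    simp [Function.comp, hvs l]
  rw [this, AlternatingMap.map_perm]
  have hc : ω (fun l => Pi.single (S.orderEmbOfFin hScard l) (1 : ℝ)) = 0 := by
    have := congrFun hω ⟨S, hScard⟩
    simpa [coords, Pi.basisFun_apply] using this
  simp [Pi.basisFun_apply, hc]

end Stmt14Aux

open Stmt14Aux in
theorem stmt14 (α : Type) [DecidableEq α] (m r s : ℕ)
    (A B : Fin m → Finset α)
    (hA : ∀ i, (A i).card = r) (hB : ∀ i, (B i).card = s)
    (hdisj : ∀ i, A i ∩ B i = ∅)
    (hcross : ∀ i j, i < j → (A i ∩ B j).Nonempty) :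
    m ≤ (r + s).choose r := by
  classical
  -- the finite ground set
  set E : Finset α := Finset.univ.biUnion (fun i => A i ∪ B i) with hE
  -- an injective-on-E real valued function
  set t : α → ℝ := fun x => if h : x ∈ E then ((E.equivFin ⟨x, h⟩ : ℕ) : ℝ) else 0 with ht
  have htinj : ∀ x ∈ E, ∀ y ∈ E, t x = t y → x = y := by
    intro x hx y hy hxy
    rw [ht] at hxy
    simp only [dif_pos hx, dif_pos hy, Nat.cast_inj] at hxy
    have := E.equivFin.injective (Fin.val_injective hxy)
    simpa using this
  -- Vandermonde row vectors
  set v : α → (Fin (r + s) → ℝ) := fun x j => t x ^ (j : ℕ) with hv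
  -- enumerations of the sets
  set ea : ∀ i, Fin r → α := fun i k => ((A i).equivFin.symm (Fin.cast (hA i).symm k) : α)
    with hea
  set eb : ∀ i, Fin s → α := fun i k => ((B i).equivFin.symm (Fin.cast (hB i).symm k) : α)
    with heb
  have hea_mem : ∀ i k, ea i k ∈ A i := fun i k => ((A i).equivFin.symm _).2
  have heb_mem : ∀ i k, eb i k ∈ B i := fun i k => ((B i).equivFin.symm _).2
  have hea_inj : ∀ i, Function.Injective (ea i) := by
    intro i a b hab
    rw [hea] at hab
    have := (A i).equivFin.symm.injective (Subtype.ext (by exact hab))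
    simpa [Fin.ext_iff] using this
  have heb_inj : ∀ i, Function.Injective (eb i) := by
    intro i a b hab
    rw [heb] at hab
    have := (B i).equivFin.symm.injective (Subtype.ext (by exact hab))
    simpa [Fin.ext_iff] using this
  -- the alternating maps and functionals
  set ω : Fin m → ((Fin (r + s) → ℝ) [⋀^Fin s]→ₗ[ℝ] ℝ) :=
    fun i => omegaMap (fun k => v (ea i k)) with hω
  set φ : Fin m → (((Fin (r + s) → ℝ) [⋀^Fin s]→ₗ[ℝ] ℝ) →ₗ[ℝ] ℝ) :=
    fun j => evalAt (fun k => v (eb j k)) with hφ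
  -- values as determinants
  have hval : ∀ i j, φ j (ω i) =
      Matrix.det (Matrix.of (Fin.append (fun k => v (ea i k)) (fun k => v (eb j k)))) := by
    intro i j; rfl
  -- diagonal is nonzero
  have hd : ∀ i, φ i (ω i) ≠ 0 := by
    intro i
    rw [hval]
    have : Matrix.of (Fin.append (fun k => v (ea i k)) (fun k => v (eb i k))) =
        Matrix.vandermonde (fun p => t (Fin.append (ea i) (eb i) p)) := by
      ext p j
      refine Fin.addCases (fun k => ?_) (fun k => ?_) p <;>
        simp [Matrix.vandermonde, hv, Fin.append_left, Fin.append_right]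
    rw [this]
    rw [Matrix.det_vandermonde_ne_zero_iff]
    intro a b hab
    -- injectivity of p ↦ t (append (ea i) (eb i) p)
    have hmem : ∀ p, Fin.append (ea i) (eb i) p ∈ E := by
      intro p
      refine Fin.addCases (fun k => ?_) (fun k => ?_) p
      · rw [Fin.append_left]
        exact Finset.mem_biUnion.mpr ⟨i, Finset.mem_univ i,
          Finset.mem_union_left _ (hea_mem i k)⟩
      · rw [Fin.append_right]
        exact Finset.mem_biUnion.mpr ⟨i, Finset.mem_univ i,
          Finset.mem_union_right _ (heb_mem i k)⟩
    have heq : Fin.append (ea i) (eb i) a = Fin.append (ea i) (eb i) b :=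
      htinj _ (hmem a) _ (hmem b) hab
    have hcases : ∀ p : Fin (r + s), (∃ k, p = Fin.castAdd s k) ∨ (∃ k, p = Fin.natAdd r k) :=
      fun p => Fin.addCases (fun k => Or.inl ⟨k, rfl⟩) (fun k => Or.inr ⟨k, rfl⟩) p
    -- append of injective functions with disjoint images is injective
    have hAB : ∀ x, x ∈ A i → x ∈ B i → False := by
      intro x hxA hxB
      have : x ∈ A i ∩ B i := Finset.mem_inter.mpr ⟨hxA, hxB⟩
      rw [hdisj i] at this
      exact absurd this (Finset.notMem_empty x)
    rcases hcases a with ⟨ka, rfl⟩ | ⟨ka, rfl⟩ <;> rcases hcases b with ⟨kb, rfl⟩ | ⟨kb, rfl⟩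
    · rw [Fin.append_left, Fin.append_left] at heq
      rw [hea_inj i heq]
    · rw [Fin.append_left, Fin.append_right] at heq
      exact (hAB _ (hea_mem i ka) (heq ▸ heb_mem i kb)).elim
    · rw [Fin.append_right, Fin.append_left] at heq
      exact (hAB _ (hea_mem i kb) (heq.symm ▸ heb_mem i ka)).elim
    · rw [Fin.append_right, Fin.append_right] at heq
      rw [heb_inj i heq]
  -- above diagonal is zero
  have ho : ∀ i j, i < j → φ j (ω i) = 0 := by
    intro i j hij
    rw [hval]
    obtain ⟨x, hx⟩ := hcross i j hij
    obtain ⟨hxA, hxB⟩ := Finset.mem_inter.mp hx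
    -- x = ea i ka = eb j kb for some ka kb
    obtain ⟨ka, hka⟩ : ∃ ka, ea i ka = x :=
      ⟨Fin.cast (hA i) ((A i).equivFin ⟨x, hxA⟩), by simp [hea]⟩
    obtain ⟨kb, hkb⟩ : ∃ kb, eb j kb = x :=
      ⟨Fin.cast (hB j) ((B j).equivFin ⟨x, hxB⟩), by simp [heb]⟩
    refine Matrix.det_zero_of_row_eq (i := Fin.castAdd s ka) (j := Fin.natAdd r kb) ?_ ?_
    · exact Fin.ne_of_val_ne (by simp; omega)
    · show Fin.append (fun k => v (ea i k)) (fun k => v (eb j k)) (Fin.castAdd s ka) =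
        Fin.append (fun k => v (ea i k)) (fun k => v (eb j k)) (Fin.natAdd r kb)
      rw [Fin.append_left, Fin.append_right, hka, hkb]
  -- linear independence and dimension count
  have hli : LinearIndependent ℝ ω := linearIndependent_of_triangular ω φ hd ho
  have hli2 : LinearIndependent ℝ ((coords (r + s) s) ∘ ω) :=
    hli.map' _ (coords_injective (r + s) s)
  have hcard := hli2.fintype_card_le_finrank
  rw [Fintype.card_fin] at hcard
  have hfr : Module.finrank ℝ ({S : Finset (Fin (r + s)) // S.card = s} → ℝ) =
      (r + s).choose s := by
    rw [Module.finrank_pi, Fintype.card_finset_len, Fintype.card_fin]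
  rw [hfr] at hcard
  calc m ≤ (r + s).choose s := hcard
    _ = (r + s).choose r := Nat.choose_symm_of_eq_add (by omega)
end

section
/- Let A_1,...,A_m and B_1,...,B_m be finite sets such that A_i ∩ B_j = ∅ if and only if i = j. Then the sum over i of 1/C(|A_i| + |B_i|, |A_i|) is at most 1. -/
open Finset

private lemma bollobas_small {α : Type} [DecidableEq α] (s : Finset ℕ)
    (A B : ℕ → Finset α) (hs : s.card ≤ 1) :
    ∑ i ∈ s, (1:ℚ) / (((A i).card + (B i).card).choose (A i).card) ≤ 1 := by
  have h1 : ∀ i ∈ s, (1:ℚ) / (((A i).card + (B i).card).choose (A i).card) ≤ 1 := by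
    intro i _
    have hpos : 0 < (((A i).card + (B i).card).choose (A i).card) :=
      Nat.choose_pos (Nat.le_add_right _ _)
    rw [div_le_one (by exact_mod_cast hpos)]
    exact_mod_cast hpos
  calc ∑ i ∈ s, (1:ℚ) / (((A i).card + (B i).card).choose (A i).card)
      ≤ ∑ _i ∈ s, (1:ℚ) := Finset.sum_le_sum h1
    _ = s.card := by simp
    _ ≤ 1 := by exact_mod_cast hs

private lemma bollobas_aux {α : Type} [DecidableEq α] :
    ∀ (n : ℕ) (s : Finset ℕ) (A B : ℕ → Finset α),
    (s.biUnion (fun i => A i ∪ B i)).card ≤ n →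
    (∀ i ∈ s, A i ∩ B i = ∅) →
    (∀ i ∈ s, ∀ j ∈ s, i ≠ j → (A i ∩ B j).Nonempty) →
    ∑ i ∈ s, (1:ℚ) / (((A i).card + (B i).card).choose (A i).card) ≤ 1 := by
  intro n
  induction n with
  | zero =>
    intro s A B hX hdisj hcross
    apply bollobas_small
    by_contra hc
    push_neg at hc
    obtain ⟨i, hi, j, hj, hij⟩ := Finset.one_lt_card.mp hc
    obtain ⟨y, hy⟩ := hcross i hi j hj hij
    have hyX : y ∈ s.biUnion (fun i => A i ∪ B i) := by
      refine Finset.mem_biUnion.mpr ⟨i, hi, ?_⟩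
      exact Finset.mem_union_left _ (Finset.mem_inter.mp hy).1
    have := Finset.card_eq_zero.mp (Nat.le_zero.mp hX)
    rw [this] at hyX
    exact absurd hyX (Finset.notMem_empty y)
  | succ n ih =>
    intro s A B hX hdisj hcross
    by_cases hcard : s.card ≤ 1
    · exact bollobas_small s A B hcard
    push_neg at hcard
    set X := s.biUnion (fun i => A i ∪ B i) with hXdef
    have hsubX : ∀ i ∈ s, A i ⊆ X ∧ B i ⊆ X := by
      intro i hi
      constructor <;> intro y hy <;> refine Finset.mem_biUnion.mpr ⟨i, hi, ?_⟩
      · exact Finset.mem_union_left _ hy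
      · exact Finset.mem_union_right _ hy
    have hne : ∀ i ∈ s, (A i).Nonempty ∧ (B i).Nonempty := by
      intro i hi
      obtain ⟨j, hj, k, hk, hjk⟩ := Finset.one_lt_card.mp hcard
      have hine : ∀ j ∈ s, j ≠ i → (A i).Nonempty ∧ (B i).Nonempty := by
        intro j hj hji
        obtain ⟨y, hy⟩ := hcross i hi j hj (Ne.symm hji)
        obtain ⟨z, hz⟩ := hcross j hj i hi hji
        exact ⟨⟨y, (Finset.mem_inter.mp hy).1⟩, ⟨z, (Finset.mem_inter.mp hz).2⟩⟩
      rcases eq_or_ne j i with rfl | hji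
      · exact hine k hk (fun e => hjk e.symm)
      · exact hine j hj hji
    -- key induction application per point x ∈ X
    have key : ∀ x ∈ X, ∑ i ∈ s.filter (fun i => x ∉ B i),
        (1:ℚ) / ((((A i).erase x).card + (B i).card).choose ((A i).erase x).card) ≤ 1 := by
      intro x hx
      apply ih (s.filter (fun i => x ∉ B i)) (fun i => (A i).erase x) B
      · have hsub : ((s.filter (fun i => x ∉ B i)).biUnion
            (fun i => (A i).erase x ∪ B i)) ⊆ X.erase x := by
          intro y hy
          obtain ⟨i, hi, hyi⟩ := Finset.mem_biUnion.mp hy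
          obtain ⟨hi, hxB⟩ := Finset.mem_filter.mp hi
          rcases Finset.mem_union.mp hyi with hyA | hyB
          · exact Finset.mem_erase.mpr ⟨(Finset.mem_erase.mp hyA).1,
              (hsubX i hi).1 (Finset.mem_erase.mp hyA).2⟩
          · exact Finset.mem_erase.mpr ⟨fun e => hxB (e ▸ hyB), (hsubX i hi).2 hyB⟩
        calc ((s.filter (fun i => x ∉ B i)).biUnion (fun i => (A i).erase x ∪ B i)).card
            ≤ (X.erase x).card := Finset.card_le_card hsub
          _ = X.card - 1 := Finset.card_erase_of_mem hx
          _ ≤ n := by omega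
      · intro i hi
        have hi' := (Finset.mem_filter.mp hi).1
        have := hdisj i hi'
        rw [Finset.eq_empty_iff_forall_notMem] at this ⊢
        intro y hy
        exact this y (Finset.mem_inter.mpr ⟨Finset.mem_of_mem_erase (Finset.mem_inter.mp hy).1,
          (Finset.mem_inter.mp hy).2⟩)
      · intro i hi j hj hij
        obtain ⟨hi', hxBi⟩ := Finset.mem_filter.mp hi
        obtain ⟨hj', hxBj⟩ := Finset.mem_filter.mp hj
        obtain ⟨y, hy⟩ := hcross i hi' j hj' hij
        obtain ⟨hyA, hyB⟩ := Finset.mem_inter.mp hy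
        refine ⟨y, Finset.mem_inter.mpr ⟨Finset.mem_erase.mpr ⟨fun e => hxBj (e ▸ hyB), hyA⟩, hyB⟩⟩
    -- sum the key bound over x ∈ X
    have hsum : ∑ x ∈ X, ∑ i ∈ s.filter (fun i => x ∉ B i),
        (1:ℚ) / ((((A i).erase x).card + (B i).card).choose ((A i).erase x).card)
        ≤ (X.card : ℚ) := by
      calc _ ≤ ∑ _x ∈ X, (1:ℚ) := Finset.sum_le_sum key
        _ = X.card := by simp
    have hswap : ∑ x ∈ X, ∑ i ∈ s.filter (fun i => x ∉ B i),
        (1:ℚ) / ((((A i).erase x).card + (B i).card).choose ((A i).erase x).card)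
        = ∑ i ∈ s, ∑ x ∈ X, (if x ∉ B i then
            (1:ℚ) / ((((A i).erase x).card + (B i).card).choose ((A i).erase x).card) else 0) := by
      rw [Finset.sum_comm]
      refine Finset.sum_congr rfl fun x _ => ?_
      rw [Finset.sum_filter]
    -- per-index evaluation
    have hinner : ∀ i ∈ s, ∑ x ∈ X, (if x ∉ B i then
        (1:ℚ) / ((((A i).erase x).card + (B i).card).choose ((A i).erase x).card) else 0)
        = (X.card : ℚ) / (((A i).card + (B i).card).choose (A i).card) := by
      intro i hi
      obtain ⟨hAX, hBX⟩ := hsubX i hi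
      obtain ⟨hAne, hBne⟩ := hne i hi
      have hAB := hdisj i hi
      obtain ⟨a', ha'⟩ := Nat.exists_eq_succ_of_ne_zero (Finset.card_ne_zero.mpr hAne)
      set b := (B i).card with hb
      have hBsub : B i ⊆ X \ A i := by
        intro y hy
        refine Finset.mem_sdiff.mpr ⟨hBX hy, fun hyA => ?_⟩
        have : y ∈ A i ∩ B i := Finset.mem_inter.mpr ⟨hyA, hy⟩
        rw [hAB] at this; exact absurd this (Finset.notMem_empty y)
      have hsplit1 : ∑ x ∈ X \ A i, (if x ∉ B i then
            (1:ℚ) / ((((A i).erase x).card + b).choose ((A i).erase x).card) else 0)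
          + ∑ x ∈ A i, (if x ∉ B i then
            (1:ℚ) / ((((A i).erase x).card + b).choose ((A i).erase x).card) else 0)
          = ∑ x ∈ X, (if x ∉ B i then
            (1:ℚ) / ((((A i).erase x).card + b).choose ((A i).erase x).card) else 0) :=
        Finset.sum_sdiff hAX
      have hsplit2 : ∑ x ∈ (X \ A i) \ B i, (if x ∉ B i then
            (1:ℚ) / ((((A i).erase x).card + b).choose ((A i).erase x).card) else 0)
          + ∑ x ∈ B i, (if x ∉ B i then
            (1:ℚ) / ((((A i).erase x).card + b).choose ((A i).erase x).card) else 0)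
          = ∑ x ∈ X \ A i, (if x ∉ B i then
            (1:ℚ) / ((((A i).erase x).card + b).choose ((A i).erase x).card) else 0) :=
        Finset.sum_sdiff hBsub
      have hA : ∑ x ∈ A i, (if x ∉ B i then
            (1:ℚ) / ((((A i).erase x).card + b).choose ((A i).erase x).card) else 0)
          = (A i).card * ((1:ℚ) / ((a' + b).choose a')) := by
        rw [Finset.sum_congr rfl (fun x hx => ?_), Finset.sum_const, nsmul_eq_mul]
        have hxB : x ∉ B i := by
          intro hxb
          have : x ∈ A i ∩ B i := Finset.mem_inter.mpr ⟨hx, hxb⟩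
          rw [hAB] at this; exact absurd this (Finset.notMem_empty x)
        rw [if_pos hxB, Finset.card_erase_of_mem hx, ha']
        simp
      have hB : ∑ x ∈ B i, (if x ∉ B i then
            (1:ℚ) / ((((A i).erase x).card + b).choose ((A i).erase x).card) else 0) = 0 := by
        refine Finset.sum_eq_zero fun x hx => if_neg (by simp [hx])
      have hR : ∑ x ∈ (X \ A i) \ B i, (if x ∉ B i then
            (1:ℚ) / ((((A i).erase x).card + b).choose ((A i).erase x).card) else 0)
          = ((X \ A i) \ B i).card * ((1:ℚ) / (((A i).card + b).choose (A i).card)) := by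
        rw [Finset.sum_congr rfl (fun x hx => ?_), Finset.sum_const, nsmul_eq_mul]
        obtain ⟨hx1, hx2⟩ := Finset.mem_sdiff.mp hx
        have hxA : x ∉ A i := (Finset.mem_sdiff.mp hx1).2
        rw [if_pos hx2, Finset.erase_eq_of_notMem hxA]
      -- cardinalities
      have hcA : (X \ A i).card = X.card - (A i).card := Finset.card_sdiff_of_subset hAX
      have hcR : ((X \ A i) \ B i).card = X.card - (A i).card - b := by
        rw [Finset.card_sdiff_of_subset hBsub, hcA]
      have hle1 : (A i).card ≤ X.card := Finset.card_le_card hAX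
      have hle2 : b ≤ X.card - (A i).card := hcA ▸ Finset.card_le_card hBsub
      have hNcard : X.card = (A i).card + b + ((X \ A i) \ B i).card := by omega
      -- the key choose identity
      have hch : ((A i).card + b) * ((a' + b).choose a')
          = (((A i).card + b).choose (A i).card) * (A i).card := by
        rw [ha']
        have h0 := Nat.add_one_mul_choose_eq (a' + b) a'
        rw [show a' + 1 + b = a' + b + 1 by omega]
        exact h0
      have hC1pos : (0:ℚ) < ((a' + b).choose a') := by
        exact_mod_cast Nat.choose_pos (Nat.le_add_right _ _)
      have hC2pos : (0:ℚ) < (((A i).card + b).choose (A i).card) := by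
        exact_mod_cast Nat.choose_pos (Nat.le_add_right _ _)
      rw [← hsplit1, ← hsplit2, hA, hB, hR, add_zero]
      have hchQ : ((A i).card + b : ℚ) * ((a' + b).choose a')
          = (((A i).card + b).choose (A i).card) * (A i).card := by exact_mod_cast hch
      have hNQ : (X.card : ℚ) = (A i).card + b + ((X \ A i) \ B i).card := by exact_mod_cast hNcard
      rw [hNQ]
      field_simp
      nlinarith [hchQ]
    -- conclude
    have hfinal : (X.card : ℚ) * ∑ i ∈ s, (1:ℚ) / (((A i).card + (B i).card).choose (A i).card)
        ≤ (X.card : ℚ) := by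
      rw [Finset.mul_sum]
      calc ∑ i ∈ s, (X.card : ℚ) * ((1:ℚ) / (((A i).card + (B i).card).choose (A i).card))
          = ∑ i ∈ s, ∑ x ∈ X, (if x ∉ B i then
            (1:ℚ) / ((((A i).erase x).card + (B i).card).choose ((A i).erase x).card) else 0) := by
            refine Finset.sum_congr rfl fun i hi => ?_
            rw [hinner i hi, mul_one_div]
        _ ≤ (X.card : ℚ) := by rw [← hswap]; exact hsum
    have hXpos : (0:ℚ) < X.card := by
      obtain ⟨j, hj, k, hk, hjk⟩ := Finset.one_lt_card.mp hcard
      obtain ⟨y, hy⟩ := hcross j hj k hk hjk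
      have : y ∈ X := (hsubX j hj).1 (Finset.mem_inter.mp hy).1
      exact_mod_cast Finset.card_pos.mpr ⟨y, this⟩
    nlinarith [hfinal, hXpos]

theorem stmt15 (α : Type) [DecidableEq α] (m : ℕ)
    (A B : Fin m → Finset α)
    (h : ∀ i j, A i ∩ B j = ∅ ↔ i = j) :
    ∑ i : Fin m, (1 : ℚ) / (((A i).card + (B i).card).choose (A i).card) ≤ 1 := by
  classical
  set A' : ℕ → Finset α := fun k => if h : k < m then A ⟨k, h⟩ else ∅ with hA'
  set B' : ℕ → Finset α := fun k => if h : k < m then B ⟨k, h⟩ else ∅ with hB'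
  have key := bollobas_aux ((Finset.range m).biUnion (fun i => A' i ∪ B' i)).card
    (Finset.range m) A' B' le_rfl ?_ ?_
  · calc ∑ i : Fin m, (1 : ℚ) / (((A i).card + (B i).card).choose (A i).card)
        = ∑ k ∈ Finset.range m, (1:ℚ) / (((A' k).card + (B' k).card).choose (A' k).card) := by
          rw [← Fin.sum_univ_eq_sum_range]
          refine Finset.sum_congr rfl fun i _ => ?_
          simp [hA', hB', i.is_lt]
      _ ≤ 1 := key
  · intro i hi
    have him : i < m := Finset.mem_range.mp hi
    simp only [hA', hB', dif_pos him]
    exact (h ⟨i, him⟩ ⟨i, him⟩).mpr rfl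
  · intro i hi j hj hij
    have him : i < m := Finset.mem_range.mp hi
    have hjm : j < m := Finset.mem_range.mp hj
    simp only [hA', hB', dif_pos him, dif_pos hjm]
    rw [Finset.nonempty_iff_ne_empty]
    intro he
    exact hij (Fin.mk.injEq .. ▸ (h ⟨i, him⟩ ⟨j, hjm⟩).mp he)
end

section
/- For q ≥ 3 a prime power and n ≥ 1, the maximal size m(n,q) of a cross-intersecting pair of families of affine subspaces of F_q^n satisfies (q^n - 1)/(q - 1) ≤ m(n,q) ≤ q^n + 1. -/
def CrossIntersecting {F : Type*} [Field F] {n m : ℕ}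
    (A B : Fin m → Set (Fin n → F)) : Prop :=
  (∀ i, IsAffineSubspace (A i)) ∧ (∀ i, IsAffineSubspace (B i)) ∧
  (∀ i, A i ∩ B i = ∅) ∧ (∀ i j, i < j → (A i ∩ B j).Nonempty)


open Finset Submodule

section Aux

variable {F : Type*} [Field F] {n : ℕ}

/-- Separation: disjoint affine subspaces are separated by an affine functional. -/
lemma sep_lemma {A B : Set (Fin n → F)}
    (hA : IsAffineSubspace A) (hB : IsAffineSubspace B) (hd : A ∩ B = ∅) :
    ∃ (φ : (Fin n → F) →ₗ[F] F) (c : F), (∀ x ∈ A, φ x = c) ∧ (∀ y ∈ B, φ y = c - 1) := by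
  obtain ⟨a, U, rfl⟩ := hA
  obtain ⟨b, V, rfl⟩ := hB
  have hab : a - b ∉ U ⊔ V := by
    intro h
    rw [Submodule.mem_sup] at h
    obtain ⟨u, hu, v, hv, huv⟩ := h
    have hmem : a + -u ∈ ((fun u => a + u) '' U) ∩ ((fun u => b + u) '' V) := by
      refine ⟨⟨-u, neg_mem hu, rfl⟩, ⟨v, hv, ?_⟩⟩
      have h' : u + v = a - b := huv
      linear_combination h'
    rw [hd] at hmem
    exact hmem
  obtain ⟨f, hf1, hf2⟩ := Submodule.exists_dual_map_eq_bot_of_notMem hab inferInstance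
  have hker : ∀ x ∈ U ⊔ V, f x = 0 := by
    intro x hx
    have : f x ∈ (U ⊔ V).map f := Submodule.mem_map_of_mem hx
    rwa [hf2, Submodule.mem_bot] at this
  refine ⟨(f (a - b))⁻¹ • f, (f (a - b))⁻¹ * f a, ?_, ?_⟩
  · rintro x ⟨u, hu, rfl⟩
    simp [hker u (Submodule.mem_sup_left hu)]
  · rintro y ⟨v, hv, rfl⟩
    simp only [LinearMap.smul_apply, map_add, hker v (Submodule.mem_sup_right hv), add_zero,
      smul_eq_mul, map_sub]
    have hne : f a - f b ≠ 0 := by rw [← map_sub]; exact hf1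
    field_simp
    ring

/-- Proportionality from a kernel inclusion. -/
lemma prop_of_ker (f g : (Fin n → F) →ₗ[F] F) (v : Fin n → F) (hv : f v ≠ 0)
    (h : ∀ x, f x = 0 → g x = 0) : ∀ x, g x = (g v / f v) * f x := by
  intro x
  have h1 : f (x - (f x / f v) • v) = 0 := by
    simp [map_sub, map_smul, smul_eq_mul, div_mul_cancel₀ _ hv]
  have h2 := h _ h1
  simp only [map_sub, map_smul, smul_eq_mul, sub_eq_zero] at h2
  rw [h2]
  field_simp

/-- If `v ∈ K'` and `f v ≠ 0` then `ker f ⊔ K' = ⊤` membership-wise. -/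
lemma mem_sup_ker (f : (Fin n → F) →ₗ[F] F) (K' : Submodule F (Fin n → F)) (v : Fin n → F)
    (hv : v ∈ K') (hfv : f v ≠ 0) (x : Fin n → F) : x ∈ LinearMap.ker f ⊔ K' := by
  rw [Submodule.mem_sup]
  refine ⟨x - (f x / f v) • v, ?_, (f x / f v) • v, K'.smul_mem _ hv, by abel⟩
  rw [LinearMap.mem_ker, map_sub, map_smul, smul_eq_mul, div_mul_cancel₀ _ hfv, sub_self]

variable [Fintype F]

lemma lines_count [DecidableEq F] [DecidableEq (Fin n → F)]
    [DecidableEq (Submodule F (Fin n → F))] :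
    (Fintype.card F - 1) *
      #((Finset.univ.erase (0 : Fin n → F)).image
        (fun w => Submodule.span F ({w} : Set (Fin n → F)))) =
      Fintype.card F ^ n - 1 := by
  set S := Finset.univ.erase (0 : Fin n → F) with hSdef
  have hS : #S = Fintype.card F ^ n - 1 := by
    rw [hSdef, Finset.card_erase_of_mem (Finset.mem_univ _), Finset.card_univ, Fintype.card_fun,
      Fintype.card_fin]
  have hfib : ∀ L ∈ S.image (fun w => Submodule.span F ({w} : Set (Fin n → F))),
      #{w ∈ S | Submodule.span F ({w} : Set (Fin n → F)) = L} = Fintype.card F - 1 := by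
    intro L hL
    obtain ⟨w₀, hw₀S, hw₀⟩ := Finset.mem_image.mp hL
    have hw₀0 : w₀ ≠ 0 := (Finset.mem_erase.mp hw₀S).1
    have hcF : #(Finset.univ.erase (0 : F)) = Fintype.card F - 1 := by
      rw [Finset.card_erase_of_mem (Finset.mem_univ _), Finset.card_univ]
    rw [← hcF]
    refine (Finset.card_nbij (fun t => t • w₀) ?_ ?_ ?_).symm
    · intro t ht
      have ht0 : t ≠ 0 := (Finset.mem_erase.mp ht).1
      refine Finset.mem_filter.mpr ⟨Finset.mem_erase.mpr ⟨smul_ne_zero ht0 hw₀0, Finset.mem_univ _⟩, ?_⟩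
      rw [Submodule.span_singleton_smul_eq (isUnit_iff_ne_zero.mpr ht0), hw₀]
    · intro t _ t' _ h
      exact smul_left_injective F hw₀0 h
    · intro w hw
      simp only [Finset.coe_filter, Set.mem_setOf_eq] at hw
      obtain ⟨hwS, hwL⟩ := hw
      have hw0 : w ≠ 0 := (Finset.mem_erase.mp hwS).1
      have : w ∈ Submodule.span F ({w₀} : Set (Fin n → F)) := by
        rw [hw₀, ← hwL]; exact Submodule.mem_span_singleton_self w
      obtain ⟨t, ht⟩ := Submodule.mem_span_singleton.mp this
      have ht0 : t ≠ 0 := by rintro rfl; rw [zero_smul] at ht; exact hw0 ht.symm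
      exact ⟨t, Finset.mem_coe.mpr (Finset.mem_erase.mpr ⟨ht0, Finset.mem_univ _⟩), ht⟩
  have hsum := Finset.card_eq_sum_card_fiberwise (s := S)
    (t := S.image (fun w => Submodule.span F ({w} : Set (Fin n → F))))
    (f := fun w => Submodule.span F ({w} : Set (Fin n → F)))
    (fun w hw => Finset.mem_image_of_mem _ hw)
  rw [Finset.sum_congr rfl hfib, Finset.sum_const, smul_eq_mul] at hsum
  rw [mul_comm, ← hsum, hS]

end Aux

noncomputable def dotf {F : Type*} [Field F] {n : ℕ} (w : Fin n → F) : (Fin n → F) →ₗ[F] F :=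
  ∑ l, w l • LinearMap.proj l

lemma dotf_apply {F : Type*} [Field F] {n : ℕ} (w x : Fin n → F) :
    dotf w x = ∑ l, w l * x l := by
  simp [dotf, LinearMap.proj, smul_eq_mul]

lemma dotf_single {F : Type*} [Field F] {n : ℕ} (w : Fin n → F) (l : Fin n) :
    dotf w (Pi.single l 1) = w l := by
  rw [dotf_apply]
  rw [Finset.sum_eq_single l]
  · simp
  · intro j _ hj
    simp [Pi.single_apply, Ne.symm hj]
  · simp

theorem stmt16 (q n : ℕ) (hq : IsPrimePow q) (hq3 : 3 ≤ q) (hn : 1 ≤ n)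
    (F : Type) [Field F] [Fintype F] (hF : Fintype.card F = q) :
    (∃ A B : Fin ((q ^ n - 1) / (q - 1)) → Set (Fin n → F), CrossIntersecting A B) ∧
    (∀ m : ℕ, ∀ A B : Fin m → Set (Fin n → F), CrossIntersecting A B → m ≤ q ^ n + 1) := by
  classical
  set L := (Finset.univ.erase (0 : Fin n → F)).image
      (fun w => Submodule.span F ({w} : Set (Fin n → F))) with hLdef
  have hcount : (q - 1) * #L = q ^ n - 1 := by
    have := lines_count (F := F) (n := n)
    rwa [hF] at this
  constructor
  · -- Lower bound construction
    have hM : (q ^ n - 1) / (q - 1) = #L := by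
      rw [← hcount, Nat.mul_div_cancel_left _ (by omega)]
    set e : Fin ((q ^ n - 1) / (q - 1)) → Submodule F (Fin n → F) :=
      fun i => ((L.equivFin.symm (Fin.cast hM i)) : Submodule F (Fin n → F)) with hedef
    have he : Function.Injective e := by
      intro i j h
      have h3 := L.equivFin.symm.injective (Subtype.ext h)
      have h4 := congrArg Fin.val h3
      exact Fin.val_injective h4
    have heL : ∀ i, e i ∈ L := fun i => (L.equivFin.symm (Fin.cast hM i)).2
    have hwex : ∀ i, ∃ w : Fin n → F, w ≠ 0 ∧ Submodule.span F ({w} : Set (Fin n → F)) = e i := by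
      intro i
      obtain ⟨w, hwS, hsp⟩ := Finset.mem_image.mp (heL i)
      exact ⟨w, (Finset.mem_erase.mp hwS).1, hsp⟩
    choose w hw0 hwsp using hwex
    have hlex : ∀ i, ∃ l, w i l ≠ 0 := by
      intro i
      by_contra h
      push_neg at h
      exact hw0 i (funext h)
    choose l hl using hlex
    set u : Fin ((q ^ n - 1) / (q - 1)) → (Fin n → F) := fun i => Pi.single (l i) 1 with hudef
    have hui : ∀ i, dotf (w i) (u i) ≠ 0 := by
      intro i
      rw [hudef]
      simpa [dotf_single] using hl i
    set K : Fin ((q ^ n - 1) / (q - 1)) → Submodule F (Fin n → F) :=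
      fun i => LinearMap.ker (dotf (w i)) with hKdef
    have huiK : ∀ i, u i ∉ K i := fun i hm => hui i (LinearMap.mem_ker.mp hm)
    have hKne : ∀ i j, i ≠ j → K i ≠ K j := by
      intro i j hij hK
      apply hij
      apply he
      rw [← hwsp i, ← hwsp j]
      have hvj : dotf (w j) (u i) ≠ 0 := by
        intro h0
        have hm : u i ∈ K j := LinearMap.mem_ker.mpr h0
        rw [← hK] at hm
        exact huiK i hm
      have hprop := prop_of_ker (dotf (w i)) (dotf (w j)) (u i) (hui i)
        (by
          intro x hx
          have hm : x ∈ K i := LinearMap.mem_ker.mpr hx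
          rw [hK] at hm
          exact LinearMap.mem_ker.mp hm)
      set s : F := dotf (w j) (u i) / dotf (w i) (u i) with hsdef
      have hs0 : s ≠ 0 := div_ne_zero hvj (hui i)
      have hwji : w j = s • w i := by
        funext l'
        have := hprop (Pi.single l' 1)
        rw [dotf_single, dotf_single] at this
        simpa [smul_eq_mul] using this
      rw [hwji, Submodule.span_singleton_smul_eq (isUnit_iff_ne_zero.mpr hs0)]
    refine ⟨fun i => (fun x => u i + x) '' (K i : Set (Fin n → F)),
      fun i => (fun x => (0 : Fin n → F) + x) '' (K i : Set (Fin n → F)),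
      fun i => ⟨u i, K i, rfl⟩, fun i => ⟨0, K i, rfl⟩, ?_, ?_⟩
    · intro i
      rw [Set.eq_empty_iff_forall_notMem]
      rintro x ⟨⟨p, hp, hx1⟩, ⟨p', hp', hx2⟩⟩
      apply huiK i
      have hx1' : u i + p = x := hx1
      have hx2' : (0 : Fin n → F) + p' = x := hx2
      have h1 : u i = x - p := by rw [← hx1']; abel
      have h2 : x = p' := by rw [← hx2', zero_add]
      rw [h1, h2]
      exact Submodule.sub_mem _ hp' hp
    · intro i j hij
      have hne : K i ≠ K j := hKne i j hij.ne
      have hK : u i ∈ K i ⊔ K j := by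
        by_cases hle : K j ≤ K i
        · have hle2 : ¬ K i ≤ K j := fun h => hne (le_antisymm h hle)
          obtain ⟨v, hvK, hvn⟩ := SetLike.not_le_iff_exists.mp hle2
          have hfv : dotf (w j) v ≠ 0 := fun h0 => hvn (LinearMap.mem_ker.mpr h0)
          have := mem_sup_ker (dotf (w j)) (K i) v hvK hfv (u i)
          rwa [sup_comm] at this
        · obtain ⟨v, hvK, hvn⟩ := SetLike.not_le_iff_exists.mp hle
          have hfv : dotf (w i) v ≠ 0 := fun h0 => hvn (LinearMap.mem_ker.mpr h0)
          exact mem_sup_ker (dotf (w i)) (K j) v hvK hfv (u i)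
      obtain ⟨y, hy, z, hz, hyz⟩ := Submodule.mem_sup.mp hK
      refine ⟨z, ⟨-y, neg_mem hy, ?_⟩, ⟨z, hz, zero_add z⟩⟩
      show u i + -y = z
      rw [← hyz]; abel
  · -- Upper bound
    rintro m A B ⟨hA, hB, hd, hx⟩
    have hsep := fun i => sep_lemma (hA i) (hB i) (hd i)
    choose φ c hφA hφB using hsep
    have hAne : ∀ i, (A i).Nonempty := by
      intro i
      obtain ⟨a, U, hU⟩ := hA i
      exact ⟨a + 0, hU ▸ Set.mem_image_of_mem _ (by simp)⟩
    have hBne : ∀ i, (B i).Nonempty := by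
      intro i
      obtain ⟨a, U, hU⟩ := hB i
      exact ⟨a + 0, hU ▸ Set.mem_image_of_mem _ (by simp)⟩
    set w : Fin m → Fin n → F := fun i l => φ i (fun j => if l = j then 1 else 0) with hwdef
    have hφw : ∀ i x, φ i x = ∑ l, x l * w i l := by
      intro i x
      rw [LinearMap.pi_apply_eq_sum_univ]
      simp [smul_eq_mul, hwdef]
    have hw0 : ∀ i, w i ≠ 0 := by
      intro i h0
      obtain ⟨a, ha⟩ := hAne i
      obtain ⟨b, hb⟩ := hBne i
      have h1 : φ i a = 0 := by rw [hφw]; simp [h0]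
      have h2 : φ i b = 0 := by rw [hφw]; simp [h0]
      rw [hφA i a ha] at h1
      rw [hφB i b hb] at h2
      rw [h1] at h2
      simp at h2
    have hscale : ∀ i j : Fin m, ∀ s : F, w j = s • w i → ∀ x, φ j x = s * φ i x := by
      intro i j s hs x
      rw [hφw j x, hφw i x, Finset.mul_sum]
      refine Finset.sum_congr rfl fun l _ => ?_
      rw [hs]
      simp [smul_eq_mul]
      ring
    have key : ∀ i j k : Fin m, i < j → j < k →
        Submodule.span F ({w i} : Set (Fin n → F)) = Submodule.span F ({w j} : Set (Fin n → F)) →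
        Submodule.span F ({w i} : Set (Fin n → F)) = Submodule.span F ({w k} : Set (Fin n → F)) →
        False := by
      intro i j k hij hjk hsij hsik
      have hjmem : w j ∈ Submodule.span F ({w i} : Set (Fin n → F)) := by
        rw [hsij]; exact Submodule.mem_span_singleton_self _
      obtain ⟨s, hs⟩ := Submodule.mem_span_singleton.mp hjmem
      have hkmem : w k ∈ Submodule.span F ({w i} : Set (Fin n → F)) := by
        rw [hsik]; exact Submodule.mem_span_singleton_self _
      obtain ⟨t, ht⟩ := Submodule.mem_span_singleton.mp hkmem
      have ht0 : t ≠ 0 := by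
        rintro rfl
        rw [zero_smul] at ht
        exact hw0 k ht.symm
      obtain ⟨x, hxA, hxB⟩ := hx i j hij
      obtain ⟨y, hyA, hyB⟩ := hx i k (hij.trans hjk)
      obtain ⟨z, hzA, hzB⟩ := hx j k hjk
      have e1 := hscale i j s hs.symm x
      rw [hφB j x hxB, hφA i x hxA] at e1
      -- e1 : c j - 1 = s * c i
      have e2 := hscale i k t ht.symm y
      rw [hφB k y hyB, hφA i y hyA] at e2
      -- e2 : c k - 1 = t * c i
      have e3 := hscale i j s hs.symm z
      rw [hφA j z hzA] at e3
      -- e3 : c j = s * φ i z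
      have e4 := hscale i k t ht.symm z
      rw [hφB k z hzB] at e4
      -- e4 : c k - 1 = t * φ i z
      have e5 : φ i z = c i := mul_left_cancel₀ ht0 (by rw [← e4, e2])
      rw [e5] at e3
      rw [← e3] at e1
      -- e1 : c j - 1 = c j
      have h10 : (1 : F) = 0 := by linear_combination -e1
      exact one_ne_zero h10
    have key3 : ∀ i j k : Fin m, i ≠ j → i ≠ k → j ≠ k →
        Submodule.span F ({w i} : Set (Fin n → F)) = Submodule.span F ({w j} : Set (Fin n → F)) →
        Submodule.span F ({w i} : Set (Fin n → F)) = Submodule.span F ({w k} : Set (Fin n → F)) →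
        False := by
      intro i j k hij hik hjk h1 h2
      rcases lt_trichotomy i j with h | h | h
      · rcases lt_trichotomy j k with h' | h' | h'
        · exact key i j k h h' h1 h2
        · exact hjk h'
        · rcases lt_trichotomy i k with h'' | h'' | h''
          · exact key i k j h'' h' h2 h1
          · exact hik h''
          · exact key k i j h'' h h2.symm (h2.symm.trans h1)
      · exact hij h
      · rcases lt_trichotomy i k with h' | h' | h'
        · exact key j i k h h' h1.symm (h1.symm.trans h2)
        · exact hik h'
        · rcases lt_trichotomy j k with h'' | h'' | h''
          · exact key j k i h'' h' (h1.symm.trans h2) h1.symm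
          · exact hjk h''
          · exact key k j i h'' h (h2.symm.trans h1) h2.symm
    set D : Fin m → Submodule F (Fin n → F) :=
      fun i => Submodule.span F ({w i} : Set (Fin n → F)) with hDdef
    have hfiber : ∀ b ∈ Finset.univ.image D, #{a ∈ (Finset.univ : Finset (Fin m)) | D a = b} ≤ 2 := by
      intro b _
      by_contra hc
      push_neg at hc
      have hpos : 0 < #{a ∈ (Finset.univ : Finset (Fin m)) | D a = b} := by omega
      obtain ⟨i, hi⟩ := Finset.card_pos.mp hpos
      have h4 : 1 < #({a ∈ (Finset.univ : Finset (Fin m)) | D a = b}.erase i) := by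
        rw [Finset.card_erase_of_mem hi]; omega
      obtain ⟨j, hj, k, hk, hjk⟩ := Finset.one_lt_card.mp h4
      have hDi : D i = b := (Finset.mem_filter.mp hi).2
      have hDj : D j = b := (Finset.mem_filter.mp (Finset.mem_of_mem_erase hj)).2
      have hDk : D k = b := (Finset.mem_filter.mp (Finset.mem_of_mem_erase hk)).2
      exact key3 i j k (Ne.symm (Finset.mem_erase.mp hj).1) (Ne.symm (Finset.mem_erase.mp hk).1)
        hjk (hDi.trans hDj.symm) (hDi.trans hDk.symm)
    have h1 : m ≤ 2 * #(Finset.univ.image D) := by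
      have := Finset.card_le_mul_card_image (Finset.univ : Finset (Fin m)) 2 hfiber
      simpa using this
    have h2 : Finset.univ.image D ⊆ L := by
      intro b hb
      obtain ⟨i, _, rfl⟩ := Finset.mem_image.mp hb
      exact Finset.mem_image_of_mem _ (Finset.mem_erase.mpr ⟨hw0 i, Finset.mem_univ _⟩)
    have h5 : m ≤ 2 * #L := le_trans h1 (Nat.mul_le_mul_left 2 (Finset.card_le_card h2))
    have h6 : 2 * #L ≤ (q - 1) * #L := Nat.mul_le_mul_right _ (by omega)
    have hqn : 1 ≤ q ^ n := Nat.one_le_pow _ _ (by omega)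
    omega
end
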